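/- Fix an integer d ≥ 2, α ∈ [0,1], and a natural number n ≥ 1, and let ρ_W be the Werner state with parameter α on ℂ^d ⊗ ℂ^d. Then Tr[(ρ_W^{T_A})^n] = λ₀^n + (d²−1)·λ₁^n, where λ₀ = (2α−1)/d and λ₁ = (d+1−2α)/(d(d²−1)), the trace being a real number. -/

import Mathlib

/-- Partial transpose on the `A` factor:
`(X^{T_A})_{(a,b),(a',b')} = X_{(a',b),(a,b')}`. -/
def partialTransposeA {A B : Type*} (X : Matrix (A × B) (A × B) ℂ) :
    Matrix (A × B) (A × B) ℂ :=
  fun p q => X (q.1, p.2) (p.1, q.2)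

/-- The swap matrix on `ℂ^d ⊗ ℂ^d`: `S_{(i,j),(k,l)} = δ_{i,l} δ_{j,k}`. -/
def swapMatrix (d : ℕ) : Matrix (Fin d × Fin d) (Fin d × Fin d) ℂ :=
  fun p q => if p.1 = q.2 ∧ p.2 = q.1 then 1 else 0

/-- The projector `Π₊ = (I + S)/2` onto the symmetric subspace. -/
noncomputable def symProj (d : ℕ) : Matrix (Fin d × Fin d) (Fin d × Fin d) ℂ :=
  (2 : ℂ)⁻¹ • (1 + swapMatrix d)

/-- The projector `Π₋ = (I − S)/2` onto the antisymmetric subspace. -/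
noncomputable def antisymProj (d : ℕ) : Matrix (Fin d × Fin d) (Fin d × Fin d) ℂ :=
  (2 : ℂ)⁻¹ • (1 - swapMatrix d)

/-- The Werner state with parameter `α`:
`ρ_W = α·Π₊/(d(d+1)/2) + (1−α)·Π₋/(d(d−1)/2)`. -/
noncomputable def wernerState (d : ℕ) (α : ℝ) :
    Matrix (Fin d × Fin d) (Fin d × Fin d) ℂ :=
  ((α : ℂ) / ((d : ℂ) * ((d : ℂ) + 1) / 2)) • symProj d +
    (((1 - α : ℝ) : ℂ) / ((d : ℂ) * ((d : ℂ) - 1) / 2)) • antisymProj d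

/-- The projector onto the maximally entangled state:
`(Δ₀)_{(i,j),(k,l)} = δ_{i,j} δ_{k,l} / d`. -/
noncomputable def maxEntProj (d : ℕ) : Matrix (Fin d × Fin d) (Fin d × Fin d) ℂ :=
  fun p q => (if p.1 = p.2 ∧ q.1 = q.2 then 1 else 0) / (d : ℂ)


set_option maxHeartbeats 1000000
set_option maxRecDepth 10000

lemma maxEntProj_mul_self (d : ℕ) (hd : (d:ℂ) ≠ 0) :
    maxEntProj d * maxEntProj d = maxEntProj d := by
  ext ⟨i, j⟩ ⟨k, l⟩
  simp only [Matrix.mul_apply, maxEntProj, Fintype.sum_prod_type]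
  by_cases h1 : i = j <;> by_cases h2 : k = l <;> simp [h1, h2]
  have : ∀ x : Fin d, ∑ y : Fin d, (if x = y then (1:ℂ) else 0) / ↑d * ((if x = y then 1 else 0) / ↑d) = (↑d)⁻¹ * (↑d)⁻¹ := by
    intro x
    rw [Finset.sum_eq_single x] <;> simp +contextual [eq_comm]
  simp only [this, Finset.sum_const, Finset.card_univ, Fintype.card_fin, nsmul_eq_mul]
  field_simp

lemma maxEntProj_trace (d : ℕ) (hd : (d:ℂ) ≠ 0) : (maxEntProj d).trace = 1 := by
  simp only [Matrix.trace, Matrix.diag, maxEntProj, Fintype.sum_prod_type]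
  have : ∀ x : Fin d, ∑ y : Fin d, (if x = y ∧ x = y then (1:ℂ) else 0) / ↑d = (↑d)⁻¹ := by
    intro x
    rw [Finset.sum_eq_single x] <;> simp +contextual [eq_comm]
  simp only [this, Finset.sum_const, Finset.card_univ, Fintype.card_fin, nsmul_eq_mul]
  field_simp

lemma pow_proj_decomp {m : Type*} [Fintype m] [DecidableEq m]
    (P : Matrix m m ℂ) (hP : P * P = P) (x y : ℂ) :
    ∀ n : ℕ, 1 ≤ n → (x • P + y • (1 - P)) ^ n = x ^ n • P + y ^ n • (1 - P) := by
  intro n hn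
  induction n with
  | zero => omega
  | succ n ih =>
    rcases Nat.eq_or_lt_of_le hn with h | h
    · simp [← h]
    · have hn' : 1 ≤ n := by omega
      rw [pow_succ, ih hn', add_mul, mul_add, mul_add]
      have hPQ : P * (1 - P) = 0 := by simp [Matrix.mul_sub, hP]
      have hQP : (1 - P) * P = 0 := by simp [Matrix.sub_mul, hP]
      have hQQ : (1 - P) * (1 - P) = 1 - P := by
        simp [Matrix.mul_sub, Matrix.sub_mul, hP]
      simp only [Matrix.smul_mul, Matrix.mul_smul, hP, hPQ, hQP, hQQ, smul_zero,
        add_zero, zero_add, smul_smul]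
      rw [pow_succ, pow_succ]
      ring_nf

lemma werner_PT_decomp (d : ℕ) (hd : 2 ≤ d) (α : ℝ) :
    partialTransposeA (wernerState d α) =
      ((2 * (α:ℂ) - 1) / d) • maxEntProj d +
        (((d:ℂ) + 1 - 2 * α) / (d * ((d:ℂ) ^ 2 - 1))) • (1 - maxEntProj d) := by
  have h0 : (d:ℂ) ≠ 0 := Nat.cast_ne_zero.mpr (by omega)
  have h1 : (d:ℂ) - 1 ≠ 0 := by
    rw [sub_ne_zero]
    intro h
    have : d = 1 := by exact_mod_cast h
    omega
  have h2 : (d:ℂ) + 1 ≠ 0 := by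
    intro h
    have : ((d + 1 : ℕ) : ℂ) = 0 := by push_cast; linear_combination h
    have : d + 1 = 0 := by exact_mod_cast this
    omega
  ext ⟨i, j⟩ ⟨k, l⟩
  simp only [partialTransposeA, wernerState, symProj, antisymProj, swapMatrix, maxEntProj,
    Matrix.add_apply, Matrix.smul_apply, Matrix.sub_apply, Matrix.one_apply, smul_eq_mul,
    Prod.mk.injEq]
  have h3 : (d:ℂ) ^ 2 - 1 ≠ 0 := by
    have : (d:ℂ) ^ 2 - 1 = ((d:ℂ) - 1) * ((d:ℂ) + 1) := by ring
    rw [this]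
    exact mul_ne_zero h1 h2
  split_ifs <;>
    first
      | ring1
      | (field_simp; push_cast; ring1)
      | (exfalso; simp only [Fin.ext_iff, not_and] at *; omega)

/-- **PT-moments of the Werner state.**
For `d ≥ 2`, `α ∈ [0,1]` and `n ≥ 1`,
`Tr[(ρ_W^{T_A})^n] = λ₀^n + (d²−1)·λ₁^n` with `λ₀ = (2α−1)/d` and
`λ₁ = (d+1−2α)/(d(d²−1))`. -/
theorem wernerState_PT_moments (d : ℕ) (hd : 2 ≤ d) (α : ℝ)
    (hα : α ∈ Set.Icc (0 : ℝ) 1) (n : ℕ) (hn : 1 ≤ n) :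
    ((partialTransposeA (wernerState d α)) ^ n).trace =
      ((((2 * α - 1) / d) ^ n +
        ((d : ℝ) ^ 2 - 1) * (((d : ℝ) + 1 - 2 * α) / (d * ((d : ℝ) ^ 2 - 1))) ^ n : ℝ) : ℂ) := by
  have h0 : (d:ℂ) ≠ 0 := Nat.cast_ne_zero.mpr (by omega)
  rw [werner_PT_decomp d hd α,
    pow_proj_decomp (maxEntProj d) (maxEntProj_mul_self d h0) _ _ n hn]
  rw [Matrix.trace_add, Matrix.trace_smul, Matrix.trace_smul, Matrix.trace_sub,
    Matrix.trace_one, maxEntProj_trace d h0]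
  simp only [smul_eq_mul, Fintype.card_prod, Fintype.card_fin]
  push_cast
  ring
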